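/- Identify correlated policies with points of the simplex Δ(Π_det) and assume J^{π̃,k}(μ) is differentiable in π̃. If π̃_crit ∈ Δ(Π_det) satisfies ∇_{π̃^* − π̃_crit} J^{π̃_crit,k}(μ) ≥ 0, where π̃^* is the Dirac distribution at the optimal deterministic policy π_det^* (the minimizer of J^{π_det}(μ) over Π_det), then J^{π̃_crit,k}(μ) − J^{π_det^*}(μ) ≤ 6 γ^k g_max / (1−γ). -/

import Mathlib

open Finset

noncomputable section

variable {S A D : Type*} [Fintype S] [Fintype A] [Fintype D] [DecidableEq S]

/-- Transition matrix of a deterministic policy `pol`. -/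
def detKernel (P : S → A → S → ℝ) (pol : S → A) : Matrix S S ℝ :=
  Matrix.of fun s s' => P s (pol s) s'

/-- Expected discounted cost incurred during the first `k` steps when following the
deterministic policy `pol` starting from state `s`. -/
def detCost (P : S → A → S → ℝ) (g : S → A → ℝ) (γ : ℝ) (pol : S → A) (k : ℕ) (s : S) : ℝ :=
  ∑ t ∈ Finset.range k, γ ^ t * ∑ s', (detKernel P pol ^ t) s s' * g s' (pol s')

/-- Value function `J^{π_det}(s)` of a deterministic policy. -/
def detJ (P : S → A → S → ℝ) (g : S → A → ℝ) (γ : ℝ) (pol : S → A) (s : S) : ℝ :=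
  ∑' t : ℕ, γ ^ t * ∑ s', (detKernel P pol ^ t) s s' * g s' (pol s')

/-- Value `J^{π_det}(μ)` of a deterministic policy from an initial distribution `μ`. -/
def detJInit (P : S → A → S → ℝ) (g : S → A → ℝ) (γ : ℝ) (pol : S → A) (μ : S → ℝ) : ℝ :=
  ∑ s, μ s * detJ P g γ pol s

/-- The `k`-step transition kernel of the correlated policy with weights `w`
over the family `p` of deterministic policies. -/
def corKernel (P : S → A → S → ℝ) (p : D → S → A) (w : D → ℝ) (k : ℕ) : Matrix S S ℝ :=
  ∑ d, w d • (detKernel P (p d) ^ k)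

/-- Expected discounted cost of one `k`-step block of the correlated policy from `s`. -/
def blockCost (P : S → A → S → ℝ) (g : S → A → ℝ) (γ : ℝ) (p : D → S → A) (w : D → ℝ)
    (k : ℕ) (s : S) : ℝ :=
  ∑ d, w d * detCost P g γ (p d) k s

/-- The `k`-step value function `J^{π̃,k}(s)` of the correlated policy `w`. -/
def Jk (P : S → A → S → ℝ) (g : S → A → ℝ) (γ : ℝ) (p : D → S → A) (w : D → ℝ)
    (k : ℕ) (s : S) : ℝ :=
  ∑' m : ℕ, γ ^ (m * k) * ∑ s', (corKernel P p w k ^ m) s s' * blockCost P g γ p w k s'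

/-- `J^{π̃,k}(μ)`. -/
def JkInit (P : S → A → S → ℝ) (g : S → A → ℝ) (γ : ℝ) (p : D → S → A) (w : D → ℝ)
    (k : ℕ) (μ : S → ℝ) : ℝ :=
  ∑ s, μ s * Jk P g γ p w k s

/-- The `k`-step Q-function `Q^{π̃,k}(s, π')` with deterministic second argument `pol`. -/
def Qk (P : S → A → S → ℝ) (g : S → A → ℝ) (γ : ℝ) (p : D → S → A) (w : D → ℝ)
    (k : ℕ) (s : S) (pol : S → A) : ℝ :=
  detCost P g γ pol k s + γ ^ k * ∑ s', (detKernel P pol ^ k) s s' * Jk P g γ p w k s'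

/-- The `k`-step Q-function `Q^{π̃,k}(s, π̃')` with correlated second argument `w'`. -/
def QkCor (P : S → A → S → ℝ) (g : S → A → ℝ) (γ : ℝ) (p : D → S → A) (w : D → ℝ)
    (k : ℕ) (s : S) (w' : D → ℝ) : ℝ :=
  ∑ d, w' d * Qk P g γ p w k s (p d)

/-- The `k`-step discounted state occupancy measure `d_μ^{π̃,k}(s)`. -/
def dOcc (P : S → A → S → ℝ) (γ : ℝ) (p : D → S → A) (w : D → ℝ) (k : ℕ)
    (μ : S → ℝ) (s : S) : ℝ :=
  (1 - γ ^ k) * ∑' m : ℕ, γ ^ (m * k) * ∑ s0, μ s0 * (corKernel P p w k ^ m) s0 s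



set_option linter.unusedSectionVars false
set_option linter.unusedVariables false

attribute [local instance] Matrix.linftyOpNormedAddCommGroup Matrix.linftyOpNormedRing
  Matrix.linftyOpNormedAlgebra Matrix.linftyOpNormedSpace

/-- Row-stochastic matrix predicate. -/
def IsStochM (M : Matrix S S ℝ) : Prop := (∀ i j, 0 ≤ M i j) ∧ ∀ i, ∑ j, M i j = 1

lemma isStochM_one : IsStochM (1 : Matrix S S ℝ) := by
  constructor
  · intro i j
    by_cases h : i = j <;> simp [Matrix.one_apply, h]
  · intro i; simp [Matrix.one_apply]

lemma IsStochM.mul {M N : Matrix S S ℝ} (hM : IsStochM M) (hN : IsStochM N) :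
    IsStochM (M * N) := by
  constructor
  · intro i j
    exact Finset.sum_nonneg fun l _ => mul_nonneg (hM.1 i l) (hN.1 l j)
  · intro i
    simp only [Matrix.mul_apply]
    rw [Finset.sum_comm]
    simp only [← Finset.mul_sum, hN.2]
    simpa using hM.2 i

lemma IsStochM.pow {M : Matrix S S ℝ} (hM : IsStochM M) (t : ℕ) : IsStochM (M ^ t) := by
  induction t with
  | zero => simpa using isStochM_one
  | succ n ih => rw [pow_succ]; exact ih.mul hM

lemma isStochM_detKernel {P : S → A → S → ℝ} (hP : ∀ s a, (∀ s', 0 ≤ P s a s') ∧ ∑ s', P s a s' = 1)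
    (pol : S → A) : IsStochM (detKernel P pol) :=
  ⟨fun i j => (hP i (pol i)).1 j, fun i => (hP i (pol i)).2⟩

lemma IsStochM.dot_abs_le {M : Matrix S S ℝ} (hM : IsStochM M) {y : S → ℝ} {Y : ℝ}
    (hy : ∀ j, |y j| ≤ Y) (i : S) : |∑ j, M i j * y j| ≤ Y := by
  calc |∑ j, M i j * y j| ≤ ∑ j, |M i j * y j| := Finset.abs_sum_le_sum_abs _ _
    _ ≤ ∑ j, M i j * Y := by
        refine Finset.sum_le_sum fun j _ => ?_
        rw [abs_mul, abs_of_nonneg (hM.1 i j)]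
        exact mul_le_mul_of_nonneg_left (hy j) (hM.1 i j)
    _ = Y := by rw [← Finset.sum_mul, hM.2 i, one_mul]

lemma IsStochM.norm_le_one {M : Matrix S S ℝ} (hM : IsStochM M) : ‖M‖ ≤ 1 := by
  rw [Matrix.linfty_opNorm_def]
  have : ∀ i : S, (∑ j, ‖M i j‖₊ : NNReal) ≤ 1 := by
    intro i
    have : ((∑ j, ‖M i j‖₊ : NNReal) : ℝ) = ∑ j, M i j := by
      push_cast
      exact Finset.sum_congr rfl fun j _ => by
        rw [Real.norm_eq_abs, abs_of_nonneg (hM.1 i j)]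
    have h2 : ((∑ j, ‖M i j‖₊ : NNReal) : ℝ) ≤ 1 := by rw [this, hM.2 i]
    exact_mod_cast h2
  exact_mod_cast (Finset.sup_le fun i _ => this i : (Finset.univ.sup fun i : S => ∑ j, ‖M i j‖₊) ≤ 1)

/-- Continuous linear functional `M ↦ (M *ᵥ c) s`. -/
def mvEval (c : S → ℝ) (s : S) : Matrix S S ℝ →L[ℝ] ℝ :=
  LinearMap.toContinuousLinearMap
    { toFun := fun M => ∑ s', M s s' * c s'
      map_add' := fun M N => by simp [Matrix.add_apply, add_mul, Finset.sum_add_distrib]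
      map_smul' := fun r M => by simp [Matrix.smul_apply, Finset.mul_sum, mul_assoc]
      }

@[simp] lemma mvEval_apply (c : S → ℝ) (s : S) (M : Matrix S S ℝ) :
    mvEval c s M = ∑ s', M s s' * c s' := rfl

lemma inv_one_sub_mulVec_eq_tsum (x : Matrix S S ℝ) (hx : ‖x‖ < 1) (c : S → ℝ) (s : S) :
    ∑ s', (Ring.inverse (1 - x)) s s' * c s' = ∑' m : ℕ, ∑ s', (x ^ m) s s' * c s' := by
  have hsum : Summable (fun m : ℕ => x ^ m) := summable_geometric_of_norm_lt_one hx
  rw [← geom_series_eq_inverse x hx]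
  have := (mvEval c s).map_tsum hsum
  simp only [mvEval_apply] at this
  exact this

lemma summable_mulVec_geom (x : Matrix S S ℝ) (hx : ‖x‖ < 1) (c : S → ℝ) (s : S) :
    Summable (fun m : ℕ => ∑ s', (x ^ m) s s' * c s') := by
  have hsum : Summable (fun m : ℕ => x ^ m) := summable_geometric_of_norm_lt_one hx
  simpa using (mvEval c s).summable hsum

/-- Splitting of the Neumann series. -/
lemma inv_one_sub_split (x : Matrix S S ℝ) (hx : ‖x‖ < 1) (k : ℕ) :
    Ring.inverse (1 - x) = (∑ t ∈ Finset.range k, x ^ t) + x ^ k * Ring.inverse (1 - x) := by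
  have hsum : Summable (fun m : ℕ => x ^ m) := summable_geometric_of_norm_lt_one hx
  rw [← geom_series_eq_inverse x hx]
  have h1 : ∑' m : ℕ, x ^ m = (∑ t ∈ Finset.range k, x ^ t) + ∑' m : ℕ, x ^ (m + k) :=
    (hsum.sum_add_tsum_nat_add k).symm
  have h2 : ∑' m : ℕ, x ^ (m + k) = x ^ k * ∑' m : ℕ, x ^ m := by
    have hmt : x ^ k * ∑' m : ℕ, x ^ m = ∑' m : ℕ, x ^ k * x ^ m :=
      (ContinuousLinearMap.mul ℝ (Matrix S S ℝ) (x ^ k)).map_tsum hsum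
    rw [hmt]
    refine tsum_congr fun m => ?_
    rw [← pow_add, add_comm]
  exact h1.trans (congrArg _ h2)

lemma inv_one_sub_bellman (x : Matrix S S ℝ) (hx : ‖x‖ < 1) :
    Ring.inverse (1 - x) = 1 + x * Ring.inverse (1 - x) := by
  simpa using inv_one_sub_split x hx 1

/-- Entry-evaluation continuous linear functional. -/
def entryEval (s s' : S) : Matrix S S ℝ →L[ℝ] ℝ :=
  LinearMap.toContinuousLinearMap
    { toFun := fun M => M s s'
      map_add' := fun M N => rfl
      map_smul' := fun r M => rfl }

@[simp] lemma entryEval_apply (s s' : S) (M : Matrix S S ℝ) : entryEval s s' M = M s s' := rfl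

lemma inv_one_sub_entry (x : Matrix S S ℝ) (hx : ‖x‖ < 1) (s s' : S) :
    (Ring.inverse (1 - x)) s s' = ∑' m : ℕ, (x ^ m) s s' := by
  have hsum : Summable (fun m : ℕ => x ^ m) := summable_geometric_of_norm_lt_one hx
  rw [← geom_series_eq_inverse x hx]
  have := (entryEval s s').map_tsum hsum
  simp only [entryEval_apply] at this
  exact this

lemma summable_entry_geom (x : Matrix S S ℝ) (hx : ‖x‖ < 1) (s s' : S) :
    Summable (fun m : ℕ => (x ^ m) s s') := by
  simpa using (entryEval s s').summable (summable_geometric_of_norm_lt_one hx)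

lemma smul_stoch_norm_lt {M : Matrix S S ℝ} (hM : IsStochM M) {β : ℝ} (hβ0 : 0 ≤ β)
    (hβ1 : β < 1) : ‖β • M‖ < 1 := by
  rw [norm_smul, Real.norm_eq_abs, abs_of_nonneg hβ0]
  calc β * ‖M‖ ≤ β * 1 := mul_le_mul_of_nonneg_left hM.norm_le_one hβ0
    _ < 1 := by simpa using hβ1

/-- Entries of the resolvent `(1 - β M)⁻¹` are nonnegative, with row sums `(1-β)⁻¹`. -/
lemma inv_one_sub_smul_stoch_entries {M : Matrix S S ℝ} (hM : IsStochM M) {β : ℝ}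
    (hβ0 : 0 ≤ β) (hβ1 : β < 1) :
    (∀ s s', 0 ≤ (Ring.inverse (1 - β • M)) s s') ∧
      (∀ s, ∑ s', (Ring.inverse (1 - β • M)) s s' = (1 - β)⁻¹) := by
  have hx : ‖β • M‖ < 1 := smul_stoch_norm_lt hM hβ0 hβ1
  have hentry : ∀ s s' : S, (Ring.inverse (1 - β • M)) s s' = ∑' m : ℕ, β ^ m * (M ^ m) s s' := by
    intro s s'
    rw [inv_one_sub_entry _ hx]
    refine tsum_congr fun m => ?_
    rw [smul_pow]
    rfl
  have hsummable : ∀ s s' : S, Summable (fun m : ℕ => β ^ m * (M ^ m) s s') := by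
    intro s s'
    have := summable_entry_geom _ hx s s'
    refine this.congr fun m => ?_
    rw [smul_pow]; rfl
  constructor
  · intro s s'
    rw [hentry]
    exact tsum_nonneg fun m => mul_nonneg (pow_nonneg hβ0 m) ((hM.pow m).1 s s')
  · intro s
    have : ∑ s', (Ring.inverse (1 - β • M)) s s' = ∑' m : ℕ, ∑ s', β ^ m * (M ^ m) s s' := by
      rw [Finset.sum_congr rfl fun s' _ => hentry s s']
      exact (Summable.tsum_finsetSum fun s' _ => hsummable s s').symm
    rw [this]
    have : ∀ m : ℕ, ∑ s', β ^ m * (M ^ m) s s' = β ^ m := by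
      intro m
      rw [← Finset.mul_sum, (hM.pow m).2 s, mul_one]
    rw [tsum_congr this, tsum_geometric_of_lt_one hβ0 hβ1]

omit [DecidableEq S] in
lemma abs_dot_le {n y : S → ℝ} {r Y : ℝ} (h0 : ∀ j, 0 ≤ n j) (hr : ∑ j, n j = r)
    (hy : ∀ j, |y j| ≤ Y) : |∑ j, n j * y j| ≤ r * Y := by
  calc |∑ j, n j * y j| ≤ ∑ j, |n j * y j| := Finset.abs_sum_le_sum_abs _ _
    _ ≤ ∑ j, n j * Y := by
        refine Finset.sum_le_sum fun j _ => ?_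
        rw [abs_mul, abs_of_nonneg (h0 j)]
        exact mul_le_mul_of_nonneg_left (hy j) (h0 j)
    _ = r * Y := by rw [← Finset.sum_mul, hr]

section MDP

variable (P : S → A → S → ℝ) (g : S → A → ℝ) (γ gmax : ℝ) (p : D → S → A)

lemma detJ_eq (hP : ∀ s a, (∀ s', 0 ≤ P s a s') ∧ ∑ s', P s a s' = 1)
    (hγ0 : 0 ≤ γ) (hγ1 : γ < 1) (pol : S → A) (s : S) :
    detJ P g γ pol s =
      ∑ s', (Ring.inverse (1 - γ • detKernel P pol)) s s' * g s' (pol s') := by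
  have hx : ‖γ • detKernel P pol‖ < 1 :=
    smul_stoch_norm_lt (isStochM_detKernel hP pol) hγ0 hγ1
  rw [inv_one_sub_mulVec_eq_tsum _ hx]
  refine tsum_congr fun t => ?_
  rw [smul_pow, Finset.mul_sum]
  refine Finset.sum_congr rfl fun s' _ => ?_
  rw [Matrix.smul_apply, smul_eq_mul, mul_assoc]

lemma detCost_eq (pol : S → A) (k : ℕ) (s : S) :
    detCost P g γ pol k s =
      ∑ s', (∑ t ∈ Finset.range k, (γ • detKernel P pol) ^ t) s s' * g s' (pol s') := by
  unfold detCost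
  simp only [Finset.mul_sum]
  rw [Finset.sum_comm]
  refine Finset.sum_congr rfl fun s' _ => ?_
  rw [Matrix.sum_apply, Finset.sum_mul]
  refine Finset.sum_congr rfl fun t _ => ?_
  rw [smul_pow, Matrix.smul_apply, smul_eq_mul]
  ring

lemma detJ_bellman (hP : ∀ s a, (∀ s', 0 ≤ P s a s') ∧ ∑ s', P s a s' = 1)
    (hγ0 : 0 ≤ γ) (hγ1 : γ < 1) (pol : S → A) (k : ℕ) (s : S) :
    detJ P g γ pol s = detCost P g γ pol k s +
      γ ^ k * ∑ s', (detKernel P pol ^ k) s s' * detJ P g γ pol s' := by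
  have hx : ‖γ • detKernel P pol‖ < 1 :=
    smul_stoch_norm_lt (isStochM_detKernel hP pol) hγ0 hγ1
  rw [detJ_eq P g γ hP hγ0 hγ1 pol s, detCost_eq]
  conv_lhs => rw [inv_one_sub_split _ hx k]
  simp only [Matrix.add_apply, add_mul, Finset.sum_add_distrib]
  congr 1
  have : ∀ s', ((γ • detKernel P pol) ^ k * Ring.inverse (1 - γ • detKernel P pol)) s s'
      = γ ^ k * ∑ l, (detKernel P pol ^ k) s l * (Ring.inverse (1 - γ • detKernel P pol)) l s' := by
    intro s'
    rw [smul_pow, Matrix.mul_apply, Finset.mul_sum]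
    exact Finset.sum_congr rfl fun l _ => by
      rw [Matrix.smul_apply, smul_eq_mul]; ring
  simp only [this, detJ_eq P g γ hP hγ0 hγ1 pol, Finset.mul_sum, Finset.sum_mul, mul_assoc]
  rw [Finset.sum_comm]

lemma isStochM_corKernel (hP : ∀ s a, (∀ s', 0 ≤ P s a s') ∧ ∑ s', P s a s' = 1)
    {w : D → ℝ} (hw : w ∈ stdSimplex ℝ D) (k : ℕ) : IsStochM (corKernel P p w k) := by
  obtain ⟨hw0, hw1⟩ := hw
  constructor
  · intro i j
    simp only [corKernel, Matrix.sum_apply, Matrix.smul_apply, smul_eq_mul]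
    exact Finset.sum_nonneg fun d _ =>
      mul_nonneg (hw0 d) (((isStochM_detKernel hP (p d)).pow k).1 i j)
  · intro i
    simp only [corKernel, Matrix.sum_apply, Matrix.smul_apply, smul_eq_mul]
    rw [Finset.sum_comm]
    have hd : ∀ d : D, ∑ j, w d * (detKernel P (p d) ^ k) i j = w d := fun d => by
      rw [← Finset.mul_sum, ((isStochM_detKernel hP (p d)).pow k).2 i, mul_one]
    rw [Finset.sum_congr rfl fun d _ => hd d, hw1]

lemma Jk_eq {v : D → ℝ} {k : ℕ} (hv : ‖γ ^ k • corKernel P p v k‖ < 1) (s : S) :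
    Jk P g γ p v k s = ∑ s', (Ring.inverse (1 - γ ^ k • corKernel P p v k)) s s' *
      blockCost P g γ p v k s' := by
  rw [inv_one_sub_mulVec_eq_tsum _ hv]
  refine tsum_congr fun m => ?_
  rw [smul_pow, mul_comm m k, pow_mul, Finset.mul_sum]
  refine Finset.sum_congr rfl fun s' _ => ?_
  rw [Matrix.smul_apply, smul_eq_mul, mul_assoc]

end MDP

section Bounds

variable (P : S → A → S → ℝ) (g : S → A → ℝ) (γ gmax : ℝ) (p : D → S → A)

lemma abs_detCost_le (hP : ∀ s a, (∀ s', 0 ≤ P s a s') ∧ ∑ s', P s a s' = 1)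
    (hg : ∀ s a, |g s a| ≤ gmax) (hγ0 : 0 ≤ γ) (hγ1 : γ < 1) (hgm : 0 ≤ gmax)
    (pol : S → A) (k : ℕ) (s : S) :
    |detCost P g γ pol k s| ≤ (1 - γ ^ k) / (1 - γ) * gmax := by
  have h1 : |detCost P g γ pol k s| ≤ ∑ t ∈ Finset.range k, γ ^ t * gmax := by
    refine (Finset.abs_sum_le_sum_abs _ _).trans (Finset.sum_le_sum fun t _ => ?_)
    rw [abs_mul, abs_of_nonneg (pow_nonneg hγ0 t)]
    exact mul_le_mul_of_nonneg_left
      (((isStochM_detKernel hP pol).pow t).dot_abs_le (fun j => hg j (pol j)) s)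
      (pow_nonneg hγ0 t)
  refine h1.trans ?_
  rw [← Finset.sum_mul]
  refine mul_le_mul_of_nonneg_right (le_of_eq ?_) hgm
  rw [geom_sum_eq (ne_of_lt hγ1) k]
  rw [div_eq_div_iff (by linarith) (by linarith)]
  ring

lemma abs_blockCost_le (hP : ∀ s a, (∀ s', 0 ≤ P s a s') ∧ ∑ s', P s a s' = 1)
    (hg : ∀ s a, |g s a| ≤ gmax) (hγ0 : 0 ≤ γ) (hγ1 : γ < 1) (hgm : 0 ≤ gmax)
    {w : D → ℝ} (hw : w ∈ stdSimplex ℝ D) (k : ℕ) (s : S) :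
    |blockCost P g γ p w k s| ≤ (1 - γ ^ k) / (1 - γ) * gmax := by
  have := abs_dot_le (S := D) hw.1 hw.2
    (fun d => abs_detCost_le P g γ gmax hP hg hγ0 hγ1 hgm (p d) k s)
  simpa [blockCost] using this

lemma abs_detJ_le (hP : ∀ s a, (∀ s', 0 ≤ P s a s') ∧ ∑ s', P s a s' = 1)
    (hg : ∀ s a, |g s a| ≤ gmax) (hγ0 : 0 ≤ γ) (hγ1 : γ < 1)
    (pol : S → A) (s : S) :
    |detJ P g γ pol s| ≤ (1 - γ)⁻¹ * gmax := by
  rw [detJ_eq P g γ hP hγ0 hγ1 pol s]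
  obtain ⟨hN0, hNr⟩ := inv_one_sub_smul_stoch_entries (isStochM_detKernel hP pol) hγ0 hγ1
  exact abs_dot_le (hN0 s) (hNr s) (fun j => hg j (pol j))

lemma abs_Jk_le (hP : ∀ s a, (∀ s', 0 ≤ P s a s') ∧ ∑ s', P s a s' = 1)
    (hg : ∀ s a, |g s a| ≤ gmax) (hγ0 : 0 < γ) (hγ1 : γ < 1) (hgm : 0 ≤ gmax)
    {w : D → ℝ} (hw : w ∈ stdSimplex ℝ D) (k : ℕ) (hk : 1 ≤ k) (s : S) :
    |Jk P g γ p w k s| ≤ (1 - γ)⁻¹ * gmax := by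
  have hγk0 : (0:ℝ) ≤ γ ^ k := pow_nonneg hγ0.le k
  have hγk1 : γ ^ k < 1 := pow_lt_one₀ hγ0.le hγ1 (by omega)
  have hstoch := isStochM_corKernel P p hP hw k
  have hx : ‖γ ^ k • corKernel P p w k‖ < 1 := smul_stoch_norm_lt hstoch hγk0 hγk1
  rw [Jk_eq P g γ p hx s]
  obtain ⟨hN0, hNr⟩ := inv_one_sub_smul_stoch_entries hstoch hγk0 hγk1
  have hb := abs_dot_le (hN0 s) (hNr s)
    (fun s' => abs_blockCost_le P g γ gmax p hP hg hγ0.le hγ1 hgm hw k s')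
  refine hb.trans (le_of_eq ?_)
  have h1 : (0:ℝ) < 1 - γ ^ k := by linarith
  have h2 : (0:ℝ) < 1 - γ := by linarith
  field_simp

end Bounds

section Deriv

variable [DecidableEq D]
variable (P : S → A → S → ℝ) (g : S → A → ℝ) (γ : ℝ) (p : D → S → A) (k : ℕ)

/-- `corKernel` as a continuous linear map in the weights. -/
def Mlin : (D → ℝ) →L[ℝ] Matrix S S ℝ :=
  LinearMap.toContinuousLinearMap
    { toFun := fun v => corKernel P p v k
      map_add' := fun v v' => by
        simp [corKernel, add_smul, Finset.sum_add_distrib]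
      map_smul' := fun r v => by
        simp [corKernel, Finset.smul_sum, smul_smul] }

@[simp] lemma Mlin_apply (v : D → ℝ) : Mlin P p k v = corKernel P p v k := rfl

/-- `blockCost` as a continuous linear map in the weights. -/
def clin : (D → ℝ) →L[ℝ] (S → ℝ) :=
  LinearMap.toContinuousLinearMap
    { toFun := fun v => blockCost P g γ p v k
      map_add' := fun v v' => by
        funext s; simp [blockCost, add_mul, Finset.sum_add_distrib]
      map_smul' := fun r v => by
        funext s; simp [blockCost, Finset.mul_sum, mul_assoc] }

@[simp] lemma clin_apply (v : D → ℝ) : clin P g γ p k v = blockCost P g γ p v k := rfl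

lemma deriv_main (μ : S → ℝ) (w0 : D → ℝ) (hx : ‖γ ^ k • corKernel P p w0 k‖ < 1) :
    ∃ L : (D → ℝ) →L[ℝ] ℝ,
      HasFDerivAt (fun v => ∑ s, μ s * ∑ s',
          (Ring.inverse (1 - γ ^ k • corKernel P p v k)) s s' * blockCost P g γ p v k s') L w0 ∧
      ∀ u : D → ℝ, L u = ∑ s, μ s * ∑ s',
          ((Ring.inverse (1 - γ ^ k • corKernel P p w0 k)) s s' * blockCost P g γ p u k s'
          + blockCost P g γ p w0 k s' *
            ((Ring.inverse (1 - γ ^ k • corKernel P p w0 k)) * (γ ^ k • corKernel P p u k) *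
              (Ring.inverse (1 - γ ^ k • corKernel P p w0 k))) s s') := by
  classical
  set xu : (Matrix S S ℝ)ˣ := Units.oneSub (γ ^ k • corKernel P p w0 k) hx with hxu
  set N : Matrix S S ℝ := Ring.inverse (1 - γ ^ k • corKernel P p w0 k) with hN
  have hNu : (↑xu⁻¹ : Matrix S S ℝ) = N := by
    rw [hN, ← Ring.inverse_unit xu]
    rfl
  -- derivative of the affine map v ↦ 1 - γ^k • corKernel v
  have hΨ : HasFDerivAt (fun v : D → ℝ => (1 : Matrix S S ℝ) - γ ^ k • corKernel P p v k)
      (-(γ ^ k • Mlin P p k)) w0 := by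
    have h1 : HasFDerivAt (fun v : D → ℝ => (γ ^ k • Mlin P p k) v)
        (γ ^ k • Mlin P p k) w0 := (γ ^ k • Mlin P p k).hasFDerivAt
    have := h1.const_sub (1 : Matrix S S ℝ)
    simp only [ContinuousLinearMap.smul_apply, Mlin_apply] at this
    exact this
  -- derivative of the resolvent
  have hInv : HasFDerivAt
      (fun v : D → ℝ => Ring.inverse ((1 : Matrix S S ℝ) - γ ^ k • corKernel P p v k))
      (((-(ContinuousLinearMap.mulLeftRight ℝ (Matrix S S ℝ) ↑xu⁻¹ ↑xu⁻¹)).comp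
        (-(γ ^ k • Mlin P p k)))) w0 := by
    have hbase : HasFDerivAt Ring.inverse
        (-(ContinuousLinearMap.mulLeftRight ℝ (Matrix S S ℝ) ↑xu⁻¹ ↑xu⁻¹)) ((1 : Matrix S S ℝ) - γ ^ k • corKernel P p w0 k) := by
      have := hasFDerivAt_ringInverse (𝕜 := ℝ) xu
      exact this
    exact hbase.comp w0 hΨ
  set DH : (D → ℝ) →L[ℝ] Matrix S S ℝ :=
    ((-(ContinuousLinearMap.mulLeftRight ℝ (Matrix S S ℝ) ↑xu⁻¹ ↑xu⁻¹)).comp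
        (-(γ ^ k • Mlin P p k))) with hDH
  -- entrywise derivatives
  have hEntry : ∀ s s' : S, HasFDerivAt
      (fun v : D → ℝ => (Ring.inverse ((1 : Matrix S S ℝ) - γ ^ k • corKernel P p v k)) s s')
      ((entryEval s s').comp DH) w0 := fun s s' =>
    ((entryEval s s').hasFDerivAt).comp w0 hInv
  have hc : ∀ s' : S, HasFDerivAt (fun v : D → ℝ => blockCost P g γ p v k s')
      ((ContinuousLinearMap.proj s').comp (clin P g γ p k)) w0 :=
    fun s' => ((ContinuousLinearMap.proj s').comp (clin P g γ p k)).hasFDerivAt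
  have hterm : ∀ s s' : S, HasFDerivAt
      (fun v : D → ℝ => (Ring.inverse ((1 : Matrix S S ℝ) - γ ^ k • corKernel P p v k)) s s'
        * blockCost P g γ p v k s')
      (N s s' • ((ContinuousLinearMap.proj s').comp (clin P g γ p k))
        + blockCost P g γ p w0 k s' • ((entryEval s s').comp DH)) w0 :=
    fun s s' => (hEntry s s').mul (hc s')
  have hinner : ∀ s : S, HasFDerivAt
      (fun v : D → ℝ => μ s * ∑ s',
        (Ring.inverse ((1 : Matrix S S ℝ) - γ ^ k • corKernel P p v k)) s s'
          * blockCost P g γ p v k s')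
      (μ s • ∑ s', (N s s' • ((ContinuousLinearMap.proj s').comp (clin P g γ p k))
        + blockCost P g γ p w0 k s' • ((entryEval s s').comp DH))) w0 := by
    intro s
    have hsum := HasFDerivAt.sum (fun s' (_ : s' ∈ Finset.univ) => hterm s s')
    have := hsum.const_mul (μ s)
    simpa [smul_smul] using this
  refine ⟨∑ s, μ s • ∑ s', (N s s' • ((ContinuousLinearMap.proj s').comp (clin P g γ p k))
      + blockCost P g γ p w0 k s' • ((entryEval s s').comp DH)), ?_, ?_⟩
  · exact HasFDerivAt.fun_sum (fun s (_ : s ∈ Finset.univ) => hinner s)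
  · intro u
    simp only [ContinuousLinearMap.sum_apply, ContinuousLinearMap.smul_apply,
      ContinuousLinearMap.add_apply, ContinuousLinearMap.comp_apply,
      ContinuousLinearMap.proj_apply, ContinuousLinearMap.neg_apply, clin_apply, Mlin_apply,
      entryEval_apply, hDH, ContinuousLinearMap.mulLeftRight_apply, hNu]
    refine Finset.sum_congr rfl fun s _ => ?_
    rw [smul_eq_mul]
    congr 1
    refine Finset.sum_congr rfl fun s' _ => ?_
    rw [smul_eq_mul, smul_eq_mul]
    congr 2
    simp [Matrix.neg_mul, Matrix.mul_neg]
    erw [ContinuousLinearMap.comp_apply, ContinuousLinearMap.comp_apply]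
    simp [Matrix.neg_mul, Matrix.mul_neg]
    change -(N * (-(γ ^ k • corKernel P p u k)) * N) s s' = _
    simp [Matrix.neg_mul, Matrix.mul_neg]

lemma blockCost_dirac (dstar : D) :
    blockCost P g γ p (fun d => if d = dstar then 1 else 0) k = detCost P g γ (p dstar) k := by
  funext s
  simp [blockCost, ite_mul]

lemma corKernel_dirac (dstar : D) :
    corKernel P p (fun d => if d = dstar then 1 else 0) k = detKernel P (p dstar) ^ k := by
  simp [corKernel, ite_smul]

lemma blockCost_sub (v v' : D → ℝ) :
    blockCost P g γ p (v - v') k = blockCost P g γ p v k - blockCost P g γ p v' k := by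
  funext s
  simp [blockCost, sub_mul, Finset.sum_sub_distrib]

lemma corKernel_sub (v v' : D → ℝ) :
    corKernel P p (v - v') k = corKernel P p v k - corKernel P p v' k := by
  simp [corKernel, sub_smul, Finset.sum_sub_distrib]

end Deriv

open scoped Matrix in
/-- If the directional derivative of the `k`-step objective at `π̃_crit` towards the
Dirac distribution `π̃^*` at the optimal deterministic policy is nonnegative, then
`J^{π̃_crit,k}(μ) − J^{π_det^*}(μ) ≤ 6 γ^k g_max / (1−γ)`. -/
theorem nonneg_directional_derivative_near_optimal
    [DecidableEq D]
    (P : S → A → S → ℝ) (g : S → A → ℝ) (γ gmax : ℝ) (μ : S → ℝ)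
    (p : D → S → A) (k : ℕ) (wcrit : D → ℝ) (dstar : D)
    (hP : ∀ s a, (∀ s', 0 ≤ P s a s') ∧ ∑ s', P s a s' = 1)
    (hg : ∀ s a, |g s a| ≤ gmax)
    (hγ0 : 0 < γ) (hγ1 : γ < 1)
    (hμ : μ ∈ stdSimplex ℝ S)
    (hk : 1 ≤ k)
    (hwcrit : wcrit ∈ stdSimplex ℝ D)
    (hstar : ∀ d, detJInit P g γ (p dstar) μ ≤ detJInit P g γ (p d) μ)
    (hdiff : DifferentiableAt ℝ (fun v : D → ℝ => JkInit P g γ p v k μ) wcrit)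
    (hdir : 0 ≤ fderiv ℝ (fun v : D → ℝ => JkInit P g γ p v k μ) wcrit
      ((fun d => if d = dstar then 1 else 0) - wcrit)) :
    JkInit P g γ p wcrit k μ - detJInit P g γ (p dstar) μ ≤
      6 * γ ^ k * gmax / (1 - γ) := by
  classical
  have h1γ : (0:ℝ) < 1 - γ := by linarith
  have hSne : Nonempty S := by
    by_contra h
    rw [not_nonempty_iff] at h
    have := hμ.2
    rw [Finset.univ_eq_empty, Finset.sum_empty] at this
    norm_num at this
  obtain ⟨s0⟩ := hSne
  have hgm : 0 ≤ gmax := (abs_nonneg _).trans (hg s0 (p dstar s0))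
  set B : ℝ := (1 - γ)⁻¹ * gmax with hB
  have hB0 : 0 ≤ B := mul_nonneg (by positivity) hgm
  have hγk0 : (0:ℝ) ≤ γ ^ k := by positivity
  have hγk1 : γ ^ k < 1 := pow_lt_one₀ hγ0.le hγ1 (by omega)
  have h1γk : (0:ℝ) < 1 - γ ^ k := by linarith
  -- matrices
  have hKs_st : IsStochM (detKernel P (p dstar) ^ k) := (isStochM_detKernel hP (p dstar)).pow k
  have hMb_st : IsStochM (corKernel P p wcrit k) := isStochM_corKernel P p hP hwcrit k
  have hx : ‖γ ^ k • corKernel P p wcrit k‖ < 1 := smul_stoch_norm_lt hMb_st hγk0 hγk1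
  obtain ⟨hN0, hNr⟩ := inv_one_sub_smul_stoch_entries hMb_st hγk0 hγk1
  set Ks : Matrix S S ℝ := detKernel P (p dstar) ^ k with hKsdef
  set Mb : Matrix S S ℝ := corKernel P p wcrit k with hMbdef
  set N : Matrix S S ℝ := Ring.inverse (1 - γ ^ k • Mb) with hNdef
  set cb : S → ℝ := blockCost P g γ p wcrit k with hcbdef
  set cs : S → ℝ := detCost P g γ (p dstar) k with hcsdef
  set Jv : S → ℝ := N *ᵥ cb with hJvdef
  set dJ : S → ℝ := detJ P g γ (p dstar) with hdJdef
  set hv : S → ℝ := Jv - dJ with hhvdef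
  set fv : S → ℝ := hv - γ ^ k • (Ks *ᵥ hv) with hfvdef
  -- identification of Jk with Jv
  have hJk_eq : ∀ s, Jk P g γ p wcrit k s = Jv s := fun s => Jk_eq P g γ p hx s
  -- pointwise bounds
  have habsJv : ∀ s, |Jv s| ≤ B := by
    intro s
    rw [← hJk_eq s]
    exact abs_Jk_le P g γ gmax p hP hg hγ0 hγ1 hgm hwcrit k hk s
  have habsdJ : ∀ s, |dJ s| ≤ B := fun s => abs_detJ_le P g γ gmax hP hg hγ0.le hγ1 (p dstar) s
  have habs_h : ∀ s, |hv s| ≤ 2 * B := by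
    intro s
    have : hv s = Jv s - dJ s := rfl
    rw [this]
    calc |Jv s - dJ s| ≤ |Jv s| + |dJ s| := abs_sub _ _
      _ ≤ 2 * B := by linarith [habsJv s, habsdJ s]
  have habsKsh : ∀ s, |∑ s', Ks s s' * hv s'| ≤ 2 * B := fun s => hKs_st.dot_abs_le habs_h s
  have habs_f : ∀ s, |fv s| ≤ (1 + γ ^ k) * (2 * B) := by
    intro s
    have : fv s = hv s - γ ^ k * ∑ s', Ks s s' * hv s' := rfl
    rw [this]
    have h1 := habs_h s
    have h2 := habsKsh s
    have h3 : |γ ^ k * ∑ s', Ks s s' * hv s'| ≤ γ ^ k * (2*B) := by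
      rw [abs_mul, abs_of_nonneg hγk0]
      exact mul_le_mul_of_nonneg_left h2 hγk0
    calc |hv s - γ ^ k * ∑ s', Ks s s' * hv s'| ≤ |hv s| + |γ ^ k * ∑ s', Ks s s' * hv s'| :=
        abs_sub _ _
      _ ≤ (1 + γ ^ k) * (2 * B) := by nlinarith
  -- Bellman equations
  have hBell_dJ : dJ = cs + γ ^ k • (Ks *ᵥ dJ) := by
    funext s
    exact detJ_bellman P g γ hP hγ0.le hγ1 (p dstar) k s
  have hNBell : N = 1 + (γ ^ k • Mb) * N := inv_one_sub_bellman _ hx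
  have hJvBell : Jv = cb + γ ^ k • (Mb *ᵥ Jv) := by
    conv_lhs => rw [hJvdef, hNBell]
    rw [Matrix.add_mulVec, Matrix.one_mulVec, smul_mul_assoc, Matrix.smul_mulVec,
      ← Matrix.mulVec_mulVec]
  -- key identity
  have hkey : cs - cb + γ ^ k • ((Ks - Mb) *ᵥ Jv) = -fv := by
    have hcb' : cb = Jv - γ ^ k • (Mb *ᵥ Jv) := eq_sub_of_add_eq hJvBell.symm
    have hcs' : cs = dJ - γ ^ k • (Ks *ᵥ dJ) := eq_sub_of_add_eq hBell_dJ.symm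
    rw [hcb', hcs', hfvdef, hhvdef, Matrix.sub_mulVec, Matrix.mulVec_sub, smul_sub, smul_sub]
    abel
  -- derivative identification
  obtain ⟨L, hF, hLu⟩ := deriv_main P g γ p k μ wcrit hx
  have hUopen : IsOpen {v : D → ℝ | ‖γ ^ k • corKernel P p v k‖ < 1} := by
    have hcont : Continuous fun v : D → ℝ => ‖γ ^ k • corKernel P p v k‖ := by
      have h2 : Continuous fun v : D → ℝ => (γ ^ k • Mlin P p k (S := S)) v :=
        (γ ^ k • Mlin P p k).continuous
      have h3 : Continuous fun v : D → ℝ => γ ^ k • corKernel P p v k := by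
        simpa [ContinuousLinearMap.smul_apply] using h2
      exact h3.norm
    exact isOpen_lt hcont continuous_const
  have hEv : (fun v : D → ℝ => JkInit P g γ p v k μ) =ᶠ[nhds wcrit]
      (fun v => ∑ s, μ s * ∑ s', (Ring.inverse (1 - γ ^ k • corKernel P p v k)) s s' *
        blockCost P g γ p v k s') := by
    filter_upwards [hUopen.mem_nhds (show wcrit ∈ _ from hx)] with v hvmem
    unfold JkInit
    exact Finset.sum_congr rfl fun s _ => by rw [Jk_eq P g γ p hvmem s]
  have hfd : fderiv ℝ (fun v : D → ℝ => JkInit P g γ p v k μ) wcrit = L := by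
    rw [hEv.fderiv_eq, hF.fderiv]
  rw [hfd, hLu] at hdir
  rw [blockCost_sub, blockCost_dirac, corKernel_sub, corKernel_dirac] at hdir
  -- rewrite the derivative value as a single mulVec expression
  have hsum_eq : ∀ s, (∑ s', (N s s' * (cs - cb) s'
      + cb s' * ((N * (γ ^ k • (Ks - Mb)) * N) s s'))) = (N *ᵥ (-fv)) s := by
    intro s
    rw [Finset.sum_add_distrib]
    have e1 : ∑ s', N s s' * (cs - cb) s' = (N *ᵥ (cs - cb)) s := rfl
    have e2 : ∑ s', cb s' * ((N * (γ ^ k • (Ks - Mb)) * N) s s')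
        = (N *ᵥ (γ ^ k • ((Ks - Mb) *ᵥ Jv))) s := by
      have e3 : ∑ s', cb s' * ((N * (γ ^ k • (Ks - Mb)) * N) s s')
          = ((N * (γ ^ k • (Ks - Mb)) * N) *ᵥ cb) s :=
        Finset.sum_congr rfl fun s' _ => mul_comm _ _
      rw [e3, ← Matrix.mulVec_mulVec, ← Matrix.mulVec_mulVec, Matrix.smul_mulVec]
    rw [e1, e2, ← hkey]
    have : (N *ᵥ (cs - cb + γ ^ k • ((Ks - Mb) *ᵥ Jv))) s
        = (N *ᵥ (cs - cb)) s + (N *ᵥ (γ ^ k • ((Ks - Mb) *ᵥ Jv))) s := by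
      rw [Matrix.mulVec_add]
      rfl
    rw [this]
  have hdir2 : ∑ s, μ s * (N *ᵥ fv) s ≤ 0 := by
    have he : ∑ s, μ s * ∑ s', (N s s' * (cs - cb) s'
        + cb s' * ((N * (γ ^ k • (Ks - Mb)) * N) s s')) = - ∑ s, μ s * (N *ᵥ fv) s := by
      rw [← Finset.sum_neg_distrib]
      refine Finset.sum_congr rfl fun s _ => ?_
      rw [hsum_eq s, Matrix.mulVec_neg]
      simp [mul_comm]
    rw [he] at hdir
    linarith
  -- decomposition of N *ᵥ fv
  have hsplit : ∀ s, (N *ᵥ fv) s = fv s + γ ^ k * ((Mb * N) *ᵥ fv) s := by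
    intro s
    conv_lhs => rw [hNBell]
    rw [Matrix.add_mulVec, Matrix.one_mulVec, smul_mul_assoc, Matrix.smul_mulVec]
    rfl
  -- row sums and nonnegativity of Mb * N
  have hMN0 : ∀ s s', 0 ≤ (Mb * N) s s' := by
    intro s s'
    rw [Matrix.mul_apply]
    exact Finset.sum_nonneg fun l _ => mul_nonneg (hMb_st.1 s l) (hN0 l s')
  have hMNrow : ∀ s, ∑ s', (Mb * N) s s' = (1 - γ ^ k)⁻¹ := by
    intro s
    simp only [Matrix.mul_apply]
    rw [Finset.sum_comm]
    have : ∀ l, ∑ s', Mb s l * N l s' = Mb s l * (1 - γ ^ k)⁻¹ := fun l => by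
      rw [← Finset.mul_sum, hNr l]
    rw [Finset.sum_congr rfl fun l _ => this l, ← Finset.sum_mul, hMb_st.2 s, one_mul]
  -- bounds on sums
  have hbound2 : |∑ s, μ s * ((Mb * N) *ᵥ fv) s| ≤ (1 - γ ^ k)⁻¹ * ((1 + γ ^ k) * (2 * B)) := by
    have hinner : ∀ s, |((Mb * N) *ᵥ fv) s| ≤ (1 - γ ^ k)⁻¹ * ((1 + γ ^ k) * (2 * B)) :=
      fun s => abs_dot_le (hMN0 s) (hMNrow s) habs_f
    have := abs_dot_le hμ.1 hμ.2 hinner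
    simpa using this
  have hbound3 : |∑ s, μ s * (Ks *ᵥ hv) s| ≤ 2 * B := by
    have hinner : ∀ s, |(Ks *ᵥ hv) s| ≤ 2 * B := fun s => hKs_st.dot_abs_le habs_h s
    have := abs_dot_le hμ.1 hμ.2 hinner
    simpa using this
  -- combine
  have hμh : ∑ s, μ s * hv s ≤ γ ^ k * (2 * B)
      + γ ^ k * ((1 - γ ^ k)⁻¹ * ((1 + γ ^ k) * (2 * B))) := by
    have e1 : ∑ s, μ s * (N *ᵥ fv) s
        = ∑ s, μ s * fv s + γ ^ k * ∑ s, μ s * ((Mb * N) *ᵥ fv) s := by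
      rw [Finset.mul_sum, ← Finset.sum_add_distrib]
      refine Finset.sum_congr rfl fun s _ => ?_
      rw [hsplit s]
      ring
    have e2 : ∑ s, μ s * fv s = ∑ s, μ s * hv s - γ ^ k * ∑ s, μ s * (Ks *ᵥ hv) s := by
      rw [Finset.mul_sum, ← Finset.sum_sub_distrib]
      refine Finset.sum_congr rfl fun s _ => ?_
      have : fv s = hv s - γ ^ k * (Ks *ᵥ hv) s := rfl
      rw [this]
      ring
    have h4 : -((1 - γ ^ k)⁻¹ * ((1 + γ ^ k) * (2 * B))) ≤ ∑ s, μ s * ((Mb * N) *ᵥ fv) s :=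
      (abs_le.mp hbound2).1
    have h5 : ∑ s, μ s * (Ks *ᵥ hv) s ≤ 2*B := (abs_le.mp hbound3).2
    have h6 := mul_le_mul_of_nonneg_left h4 hγk0
    have h7 := mul_le_mul_of_nonneg_left h5 hγk0
    rw [e1, e2] at hdir2
    linarith
  -- conclusion
  have hgoal_eq : JkInit P g γ p wcrit k μ - detJInit P g γ (p dstar) μ = ∑ s, μ s * hv s := by
    unfold JkInit detJInit
    rw [← Finset.sum_sub_distrib]
    refine Finset.sum_congr rfl fun s _ => ?_
    rw [hJk_eq s]
    have : hv s = Jv s - dJ s := rfl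
    rw [this]
    ring
  have hfin : ∑ s, μ s * hv s ≤ 6 * γ ^ k * B := by
    by_cases hc : γ ^ k ≤ 1/3
    · have h5 : (1 - γ ^ k)⁻¹ * ((1 + γ ^ k) * (2 * B)) ≤ 4 * B := by
        rw [inv_mul_le_iff₀ h1γk]
        nlinarith
      have h6 := mul_le_mul_of_nonneg_left h5 hγk0
      linarith
    · push_neg at hc
      have h8 : |∑ s, μ s * hv s| ≤ 2 * B := by
        have := abs_dot_le hμ.1 hμ.2 habs_h
        simpa using this
      have := (abs_le.mp h8).2
      nlinarith
  rw [hgoal_eq]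
  refine hfin.trans (le_of_eq ?_)
  rw [hB, div_eq_mul_inv]
  ring

end
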